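/- The function h(x) = −eˣ + 3 − 3e^{−x} + e^{−2x} is monotonically decreasing on [0, ∞), and consequently h(x) ≤ h(0) = 0 for every real x ≥ 0. -/

import Mathlib

/-- `h(x) = −eˣ + 3 − 3e^{−x} + e^{−2x}` is monotonically decreasing on
`[0,∞)`, and consequently `h x ≤ h 0 = 0` for `x ≥ 0`. -/
theorem aux_function_antitone_nonpos (f : ℝ → ℝ)
    (hf : ∀ x : ℝ, f x = -Real.exp x + 3 - 3 * Real.exp (-x) + Real.exp (-2 * x)) :
    AntitoneOn f (Set.Ici (0 : ℝ)) ∧ (∀ x : ℝ, 0 ≤ x → f x ≤ 0) ∧ f 0 = 0 := by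
  have hfun : f = fun x => -Real.exp x + 3 - 3 * Real.exp (-x) + Real.exp (-2 * x) :=
    funext hf
  have hd : ∀ x : ℝ, HasDerivAt f
      (-Real.exp x + 3 * Real.exp (-x) - 2 * Real.exp (-2 * x)) x := by
    intro x
    rw [hfun]
    have h1 : HasDerivAt (fun x : ℝ => Real.exp x) (Real.exp x) x := Real.hasDerivAt_exp x
    have h2 : HasDerivAt (fun x : ℝ => Real.exp (-x)) (-Real.exp (-x)) x := by
      have := ((hasDerivAt_id x).neg).exp
      simpa [mul_comm] using this
    have h3 : HasDerivAt (fun x : ℝ => Real.exp (-2 * x)) (-2 * Real.exp (-2 * x)) x := by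
      have := ((hasDerivAt_id x).const_mul (-2)).exp
      simpa [mul_comm] using this
    have := ((h1.neg.add_const 3).sub (h2.const_mul 3)).add h3
    refine this.congr_deriv ?_
    ring
  have hderiv_nonpos : ∀ x : ℝ, -Real.exp x + 3 * Real.exp (-x) - 2 * Real.exp (-2 * x) ≤ 0 := by
    intro x
    have ht : Real.exp x > 0 := Real.exp_pos x
    have h1 : Real.exp (-x) = 1 / Real.exp x := by
      rw [Real.exp_neg]; ring
    have h2 : Real.exp (-2 * x) = Real.exp (-x) ^ 2 := by
      rw [← Real.exp_nat_mul]; ring_nf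
    have key : -Real.exp x + 3 * Real.exp (-x) - 2 * Real.exp (-2 * x)
        = -((Real.exp x - 1) ^ 2 * (Real.exp x + 2)) / Real.exp x ^ 2 := by
      rw [h2, h1]; field_simp; ring
    rw [key]
    apply div_nonpos_of_nonpos_of_nonneg
    · nlinarith [sq_nonneg (Real.exp x - 1)]
    · positivity
  have hanti : AntitoneOn f (Set.Ici (0 : ℝ)) :=
    (antitone_of_deriv_nonpos (fun x => (hd x).differentiableAt)
      (fun x => by rw [(hd x).deriv]; exact hderiv_nonpos x)).antitoneOn _
  have h0 : f 0 = 0 := by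
    rw [hf]; simp
  refine ⟨hanti, fun x hx => ?_, h0⟩
  calc f x ≤ f 0 := hanti (Set.self_mem_Ici) hx hx
    _ = 0 := h0
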